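/- Let (X, υ) be a compact metric measure space and let 1 < q < ∞. Then limsup_{r → q⁺} λ_{1,r}(X) ≤ λ_{1,q}(X), i.e., for every sequence r_i decreasing to q, limsup_{i → ∞} λ_{1,r_i}(X) ≤ λ_{1,q}(X) (an inequality in (0, ∞]). -/
import Mathlib


open MeasureTheory Metric Filter Set
open scoped Topology NNReal ENNReal
open Classical

variable {X : Type*} [MetricSpace X]

/-- A real-valued function is Lipschitz (with some constant). -/
def IsLipFun (f : X → ℝ) : Prop := ∃ K : ℝ≥0, LipschitzWith K f

/-- The pointwise Lipschitz constant `Lip f (x)`: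
`0` if `x` is isolated, and otherwise the limit (= infimum, by monotonicity)
as `r → 0` of `sup_{y ∈ B_r(x), y ≠ x} |f x - f y| / dist x y`. -/
noncomputable def pLip (f : X → ℝ) (x : X) : ℝ :=
  if 𝓝[≠] x = ⊥ then 0
  else ⨅ r : Ioi (0:ℝ), sSup ((fun y => |f x - f y| / dist x y) '' (ball x r.1 \ {x}))

/-- `γ` is a (unit-speed) minimal geodesic from `x` to `y`. -/
def IsMinGeodesic (γ : ℝ → X) (x y : X) : Prop :=
  γ 0 = x ∧ γ (dist x y) = y ∧
    ∀ s ∈ Icc (0:ℝ) (dist x y), ∀ t ∈ Icc (0:ℝ) (dist x y), dist (γ s) (γ t) = |s - t|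

/-- A metric space is geodesic if any two points are joined by a minimal geodesic. -/
def IsGeodesicSpace (Y : Type*) [MetricSpace Y] : Prop :=
  ∀ x y : Y, ∃ γ : ℝ → Y, IsMinGeodesic γ x y

section MeasureDefs
variable [MeasurableSpace X] (υ : Measure X)

/-- The doubling condition for `κ`. -/
def DoublingFor (κ : ℝ) : Prop :=
  ∀ x : X, ∀ r : ℝ, 0 < r → υ (ball x (2*r)) ≤ (2:ℝ≥0∞) ^ κ * υ (ball x r)

/-- The `(q,p)`-Poincaré inequality for `τ` (for Lipschitz functions). -/
def PoincareFor (q p τ : ℝ) : Prop :=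
  ∀ x : X, ∀ r : ℝ, 0 < r → ∀ f : X → ℝ, IsLipFun f →
    (⨍ y in ball x r, |f y - ⨍ z in ball x r, f z ∂υ| ^ q ∂υ) ^ (1/q) ≤
      τ * r * ((⨍ y in ball x r, (pLip f y) ^ p ∂υ) ^ (1/p))

/-- `F_g(x,y)`: the infimum over minimal geodesics `γ` from `x` to `y` of
`∫_0^{d(x,y)} g(γ(s)) ds`. -/
noncomputable def segF (g : X → ℝ≥0∞) (x y : X) : ℝ≥0∞ :=
  ⨅ γ ∈ {γ : ℝ → X | IsMinGeodesic γ x y}, ∫⁻ s in Icc (0:ℝ) (dist x y), g (γ s)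

/-- The segment inequality for `lam`. -/
def SegmentIneqFor (lam : ℝ) : Prop :=
  ∀ x : X, ∀ r : ℝ, 0 < r → ∀ g : X → ℝ≥0∞, Measurable g →
    (∫⁻ pr in (ball x r) ×ˢ (ball x r), segF g pr.1 pr.2 ∂(υ.prod υ)) ≤
      ENNReal.ofReal (lam * r) * υ (ball x r) * ∫⁻ z in ball x (3*r), g z ∂υ

/-- The first eigenvalue of the `p`-Laplacian (`∞` if there is no competitor). -/
noncomputable def lambda1 (p : ℝ) : ℝ≥0∞ :=
  ⨅ f ∈ {f : X → ℝ | IsLipFun f ∧ (∫ x, |f x| ^ p ∂υ) = 1 ∧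
      (∫ x, |f x| ^ (p-2) * f x ∂υ) = 0},
    ENNReal.ofReal (∫ x, (pLip f x) ^ p ∂υ)

/-- Minkowski's exterior boundary measure
`υ⁺(A) = liminf_{r → 0+} (υ(B_r(A)) - υ(A))/r`. -/
noncomputable def minkBoundary (A : Set X) : ℝ≥0∞ :=
  Filter.liminf (fun r : ℝ => (υ (thickening r A) - υ A) / ENNReal.ofReal r) (𝓝[>] (0:ℝ))

/-- The Cheeger constant (`∞` if there is no competitor). -/
noncomputable def cheeger : ℝ≥0∞ :=
  ⨅ A ∈ {A : Set X | MeasurableSet A ∧ 0 < υ A ∧ υ A ≤ 1/2}, minkBoundary υ A / υ A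

/-- `λ_{1,p}` for `p ∈ [1, ∞)`, with `λ_{1,1} := h(X)` the Cheeger constant. -/
noncomputable def lam1 (p : ℝ) : ℝ≥0∞ := if p = 1 then cheeger υ else lambda1 υ p

/-- `c_p(f) = inf_{c ∈ ℝ} (∫ |f - c|^p dυ)^{1/p}`. -/
noncomputable def cP (p : ℝ) (f : X → ℝ) : ℝ :=
  ⨅ c : ℝ, (∫ x, |f x - c| ^ p ∂υ) ^ (1/p)

/-- `M` is a median of `f`. -/
def IsMedian (f : X → ℝ) (M : ℝ) : Prop :=
  (1/2 : ℝ≥0∞) ≤ υ {x | M ≤ f x} ∧ (1/2 : ℝ≥0∞) ≤ υ {x | f x ≤ M}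

end MeasureDefs

/-- The global Lipschitz constant `sup_{a ≠ b} |f a - f b| / dist a b`. -/
noncomputable def globalLip (f : X → ℝ) : ℝ :=
  sSup {L : ℝ | ∃ a b : X, a ≠ b ∧ L = |f a - f b| / dist a b}


section Helpers
open scoped Pointwise
noncomputable def psi (r s : ℝ) : ℝ := |s| ^ (r-2) * s

lemma psi_zero (r : ℝ) : psi r 0 = 0 := by simp [psi]

lemma psi_abs {r : ℝ} (hr : 1 < r) (s : ℝ) : |psi r s| = |s| ^ (r-1) := by
  rcases eq_or_ne s 0 with h | h
  · simp [psi, h, Real.zero_rpow (by intro hh; linarith : r - 1 ≠ 0)]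
  · have hs : (0:ℝ) < |s| := abs_pos.2 h
    rw [psi, abs_mul, abs_of_nonneg (Real.rpow_nonneg (abs_nonneg s) _)]
    rw [show |s| ^ (r-2) * |s| = |s| ^ (r-2) * |s| ^ (1:ℝ) by rw [Real.rpow_one],
      ← Real.rpow_add hs]
    congr 1; ring

lemma psi_of_nonneg {r : ℝ} (hr : 1 < r) {s : ℝ} (hs : 0 ≤ s) : psi r s = s ^ (r-1) := by
  rcases eq_or_lt_of_le hs with h | h
  · simp [psi, ← h, Real.zero_rpow (by intro hh; linarith : r - 1 ≠ 0)]
  · rw [psi, abs_of_pos h, show s ^ (r-2) * s = s ^ (r-2) * s ^ (1:ℝ) by rw [Real.rpow_one],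
      ← Real.rpow_add h]
    congr 1; ring

lemma psi_neg (r s : ℝ) : psi r (-s) = - psi r s := by simp [psi]

lemma psi_strictMono {r : ℝ} (hr : 1 < r) : StrictMono (psi r) := by
  have key : ∀ a b : ℝ, 0 ≤ a → a < b → psi r a < psi r b := by
    intro a b ha hab
    rw [psi_of_nonneg hr ha, psi_of_nonneg hr (ha.trans hab.le)]
    exact Real.rpow_lt_rpow ha hab (by linarith)
  intro a b hab
  rcases le_or_gt 0 a with ha | ha
  · exact key a b ha hab
  · rcases le_or_gt 0 b with hb | hb
    · have h1 : psi r a < psi r 0 := by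
        rw [psi_zero, ← neg_pos] at *
        have := key 0 (-a) le_rfl (by linarith)
        rw [psi_neg, psi_zero] at this; linarith
      rcases eq_or_lt_of_le hb with h | h
      · rw [psi_zero] at h1; rw [← h, psi_zero]; linarith [h1]
      · have h2 : psi r 0 < psi r b := key 0 b le_rfl h
        exact h1.trans h2
    · have := key (-b) (-a) (by linarith) (by linarith)
      rw [psi_neg, psi_neg] at this; linarith

lemma psi_cont {r : ℝ} (hr : 1 < r) : Continuous (psi r) := by
  rw [continuous_iff_continuousAt]
  intro s
  rcases eq_or_ne s 0 with h | h
  · subst h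
    rw [ContinuousAt, psi_zero]
    apply squeeze_zero_norm (fun t => (psi_abs hr t).le)
    have : Tendsto (fun t : ℝ => |t| ^ (r-1)) (𝓝 0) (𝓝 (|(0:ℝ)| ^ (r-1))) :=
      ((Real.continuous_rpow_const (by linarith)).comp continuous_abs).tendsto 0
    simpa [Real.zero_rpow (by intro hh; linarith : r - 1 ≠ 0)] using this
  · apply ContinuousAt.mul _ continuousAt_id
    exact (Real.continuousAt_rpow_const _ _ (Or.inl (by simpa using h))).comp
      continuous_abs.continuousAt

lemma rpow_le_bound {b B e c : ℝ} (hb : 0 ≤ b) (hs : b ≤ B) (he : 0 ≤ e) (hec : e ≤ c) :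
    b ^ e ≤ max 1 B ^ c :=
  le_trans (Real.rpow_le_rpow hb (hs.trans (le_max_right 1 B)) he)
    (Real.rpow_le_rpow_of_exponent_le (le_max_left 1 B) hec)

variable {X : Type*} [MetricSpace X]

lemma pLip_sub_const (f : X → ℝ) (t : ℝ) (x : X) :
    pLip (fun y => f y - t) x = pLip f x := by
  simp only [pLip, sub_sub_sub_cancel_right]

lemma pLip_const_mul (f : X → ℝ) {c : ℝ} (hc : 0 ≤ c) (x : X) :
    pLip (fun y => c * f y) x = c * pLip f x := by
  unfold pLip
  split_ifs with h
  · simp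
  · rw [Real.mul_iInf_of_nonneg hc]
    congr 1; funext r
    have himg : ((fun y => |c * f x - c * f y| / dist x y) '' (ball x r.1 \ {x}))
        = c • ((fun y => |f x - f y| / dist x y) '' (ball x r.1 \ {x})) := by
      rw [← Set.image_smul, Set.image_image]
      apply Set.image_congr
      intro y _
      rw [smul_eq_mul, ← mul_sub, abs_mul, abs_of_nonneg hc, mul_div_assoc]
    rw [himg, Real.sSup_smul_of_nonneg hc, smul_eq_mul]

lemma pLip_nonneg (f : X → ℝ) (x : X) : 0 ≤ pLip f x := by
  unfold pLip
  split_ifs with h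
  · exact le_refl _
  · apply Real.iInf_nonneg
    intro r
    apply Real.sSup_nonneg
    rintro v ⟨y, hy, rfl⟩
    positivity

lemma pLip_le (f : X → ℝ) {K : ℝ≥0} (hf : LipschitzWith K f) (x : X) : pLip f x ≤ K := by
  unfold pLip
  split_ifs with h
  · exact K.coe_nonneg
  · refine ciInf_le_of_le ⟨0, ?_⟩ ⟨1, Set.mem_Ioi.2 one_pos⟩ ?_
    · rintro v ⟨r, rfl⟩
      apply Real.sSup_nonneg
      rintro v ⟨y, hy, rfl⟩
      positivity
    · apply Real.sSup_le _ K.coe_nonneg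
      rintro v ⟨y, ⟨_, hy⟩, rfl⟩
      have hxy : x ≠ y := fun hh => hy (by simp [hh.symm])
      have hd : 0 < dist x y := dist_pos.2 hxy
      rw [div_le_iff₀ hd]
      calc |f x - f y| = dist (f x) (f y) := (Real.dist_eq _ _).symm
        _ ≤ K * dist x y := hf.dist_le_mul x y
end Helpers

section Main
variable {X : Type*} [MetricSpace X] [CompactSpace X] [MeasurableSpace X] [BorelSpace X]
  (υ : Measure X) [IsProbabilityMeasure υ]

lemma cont_integrable {g : X → ℝ} (hg : Continuous g) : Integrable g υ :=
  hg.integrable_of_hasCompactSupport ((isClosed_tsupport g).isCompact)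

lemma key (q : ℝ) (hq : 1 < q) :
    Filter.limsup (fun r : ℝ => lambda1 υ r) (𝓝[>] q) ≤ lambda1 υ q := by
  rw [show lambda1 υ q = ⨅ f ∈ {f : X → ℝ | IsLipFun f ∧ (∫ x, |f x| ^ q ∂υ) = 1 ∧
      (∫ x, |f x| ^ (q-2) * f x ∂υ) = 0},
    ENNReal.ofReal (∫ x, (pLip f x) ^ q ∂υ) from rfl]
  refine le_iInf₂ fun f hf => ?_
  obtain ⟨⟨K, hK⟩, h1, h2⟩ := hf
  have hfc : Continuous f := hK.continuous
  -- X is nonempty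
  have hXne : Nonempty X := by
    by_contra h
    rw [not_nonempty_iff] at h
    have h0 := measure_univ (μ := υ)
    rw [Set.univ_eq_empty_iff.2 h, measure_empty] at h0
    simp at h0
  -- bound on |f|
  obtain ⟨z, -, hz⟩ := isCompact_univ.exists_isMaxOn Set.univ_nonempty
    ((continuous_abs.comp hfc).continuousOn)
  set M : ℝ := |f z| with hMdef
  have hM : ∀ x, |f x| ≤ M := fun x => hz (Set.mem_univ x)
  have hM0 : (0:ℝ) ≤ M := abs_nonneg _
  -- the auxiliary function φ
  set φ : ℝ → ℝ → ℝ := fun r t => ∫ x, psi r (f x - t) ∂υ with hφdef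
  have hInt : ∀ r t : ℝ, 1 < r → Integrable (fun x => psi r (f x - t)) υ := fun r t hr =>
    cont_integrable υ ((psi_cont hr).comp (hfc.sub continuous_const))
  -- integrals of everywhere-negative integrands are negative
  have hneg : ∀ h : X → ℝ, Integrable h υ → (∀ x, h x < 0) → (∫ x, h x ∂υ) < 0 := by
    intro h hi hx
    have h0 : 0 < ∫ x, -h x ∂υ := by
      rw [integral_pos_iff_support_of_nonneg (fun x => (neg_pos.2 (hx x)).le) hi.neg]
      have : Function.support (fun x => -h x) = Set.univ :=
        Set.eq_univ_of_forall fun x => (neg_pos.2 (hx x)).ne'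
      rw [this, measure_univ]; norm_num
    rw [integral_neg] at h0; linarith
  -- strict antitonicity of φ r
  have hanti : ∀ r : ℝ, 1 < r → ∀ t t' : ℝ, t < t' → φ r t' < φ r t := by
    intro r hr t t' h
    have hd := hneg (fun x => psi r (f x - t') - psi r (f x - t))
      ((hInt r t' hr).sub (hInt r t hr))
      (fun x => sub_neg.2 (psi_strictMono hr (by linarith : f x - t' < f x - t)))
    rw [integral_sub (hInt r t' hr) (hInt r t hr)] at hd
    linarith
  -- continuity of φ r
  have hphiCt : ∀ r : ℝ, 1 < r → Continuous (φ r) := by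
    intro r hr
    rw [continuous_iff_continuousAt]
    intro t0
    have hball : ∀ᶠ t in 𝓝 t0, |t| ≤ |t0| + 1 := by
      filter_upwards [Metric.ball_mem_nhds t0 one_pos] with t ht
      have : |t - t0| < 1 := by rwa [Metric.mem_ball, Real.dist_eq] at ht
      calc |t| = |t0 + (t - t0)| := by ring_nf
        _ ≤ |t0| + |t - t0| := abs_add_le _ _
        _ ≤ |t0| + 1 := by linarith
    exact tendsto_integral_filter_of_dominated_convergence
      (fun _ => max 1 (M + (|t0| + 1)) ^ (r - 1))
      (Filter.Eventually.of_forall fun t =>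
        (((psi_cont hr).comp (hfc.sub continuous_const)).aestronglyMeasurable))
      (by
        filter_upwards [hball] with t ht
        refine Filter.Eventually.of_forall fun x => ?_
        rw [Real.norm_eq_abs, psi_abs hr]
        refine rpow_le_bound (abs_nonneg _) ?_ (by linarith) le_rfl
        calc |f x - t| ≤ |f x| + |t| := abs_sub _ _
          _ ≤ M + (|t0| + 1) := add_le_add (hM x) ht)
      (integrable_const _)
      (Filter.Eventually.of_forall fun x =>
        ((psi_cont hr).continuousAt.comp
          ((continuous_const.sub continuous_id).continuousAt)).tendsto)
  -- existence of roots
  have hroot : ∀ r : ℝ, 1 < r → ∃ t ∈ Icc (-(M+1)) (M+1), φ r t = 0 := by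
    intro r hr
    have hnegv : φ r (M+1) < 0 := by
      apply hneg _ (hInt r (M+1) hr)
      intro x
      have h1 : f x - (M+1) < 0 := by have := hM x; have := abs_le.1 (hM x); linarith
      have := psi_strictMono hr h1
      rwa [psi_zero] at this
    have hposv : 0 < φ r (-(M+1)) := by
      have := hneg (fun x => -psi r (f x - -(M+1))) (hInt r (-(M+1)) hr).neg ?_
      · rw [integral_neg] at this; linarith
      · intro x
        show -psi r (f x - -(M+1)) < 0
        have h1 : (0:ℝ) < f x - -(M+1) := by have := abs_le.1 (hM x); linarith
        have := psi_strictMono hr h1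
        rw [psi_zero] at this; linarith
    have := intermediate_value_Icc' (by linarith : -(M+1) ≤ (M+1))
      ((hphiCt r hr).continuousOn)
    obtain ⟨t, ht, ht0⟩ := this ⟨hnegv.le, hposv.le⟩
    exact ⟨t, ht, ht0⟩
  -- the root selection
  set T : ℝ → ℝ := fun r => if h : ∃ t ∈ Icc (-(M+1)) (M+1), φ r t = 0 then h.choose else 0
    with hTdef
  have hT : ∀ r : ℝ, 1 < r → φ r (T r) = 0 := by
    intro r hr
    rw [hTdef]
    simp only [dif_pos (hroot r hr)]
    exact (hroot r hr).choose_spec.2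
  have hIoo : Ioo q (q+1) ∈ 𝓝[>] q := Ioo_mem_nhdsGT_of_mem ⟨le_refl q, by linarith⟩
  -- convergence of φ r t to φ q t as r → q⁺, for fixed |t| ≤ 1
  have htd : ∀ t : ℝ, |t| ≤ 1 → Tendsto (fun r => φ r t) (𝓝[>] q) (𝓝 (φ q t)) := by
    intro t ht
    refine tendsto_integral_filter_of_dominated_convergence
      (fun _ => max 1 (M + 1) ^ q) ?_ ?_ (integrable_const _) ?_
    · filter_upwards [hIoo] with r hr
      exact ((psi_cont (by linarith [hr.1] : (1:ℝ) < r)).comp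
        (hfc.sub continuous_const)).aestronglyMeasurable
    · filter_upwards [hIoo] with r hr
      refine Filter.Eventually.of_forall fun x => ?_
      rw [Real.norm_eq_abs, psi_abs (by linarith [hr.1] : (1:ℝ) < r)]
      refine rpow_le_bound (abs_nonneg _) ?_ (by linarith [hr.1]) (by linarith [hr.2])
      calc |f x - t| ≤ |f x| + |t| := abs_sub _ _
        _ ≤ M + 1 := add_le_add (hM x) ht
    · refine Filter.Eventually.of_forall fun x => ?_
      rcases eq_or_ne (f x - t) 0 with h | h
      · have heq : ∀ r : ℝ, psi r (f x - t) = 0 := fun r => by rw [h, psi_zero]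
        simp only [heq]
        exact tendsto_const_nhds
      · have hcont : Tendsto (fun r : ℝ => psi r (f x - t)) (𝓝 q) (𝓝 (psi q (f x - t))) := by
          unfold psi
          exact Filter.Tendsto.mul_const _
            (tendsto_const_nhds.rpow (tendsto_id.sub tendsto_const_nhds)
              (Or.inl (by simpa using h)))
        exact hcont.mono_left nhdsWithin_le_nhds
  -- T r tends to 0
  have hφq0 : φ q 0 = 0 := by
    rw [hφdef]
    simp only [psi, sub_zero]
    exact h2
  have hT0 : Tendsto T (𝓝[>] q) (𝓝 0) := by
    rw [Metric.tendsto_nhds]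
    intro ε hε
    set δ := min ε 1 with hδdef
    have hδ0 : 0 < δ := lt_min hε one_pos
    have hδ1 : |δ| ≤ 1 := by rw [abs_of_pos hδ0]; exact min_le_right _ _
    have hδ1' : |(-δ)| ≤ 1 := by rwa [abs_neg]
    have hqδ : φ q δ < 0 := by rw [← hφq0]; exact hanti q hq 0 δ hδ0
    have hqδ' : 0 < φ q (-δ) := by rw [← hφq0]; exact hanti q hq (-δ) 0 (by linarith)
    filter_upwards [(htd δ hδ1).eventually_lt_const hqδ,
      (htd (-δ) hδ1').eventually_const_lt hqδ', hIoo] with r h1r h2r hrIoo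
    have hr1 : 1 < r := by linarith [hrIoo.1]
    have hlt : T r < δ := by
      by_contra hcon
      push_neg at hcon
      rcases eq_or_lt_of_le hcon with h | h
      · rw [h, hT r hr1] at h1r; linarith
      · have := hanti r hr1 δ (T r) h
        rw [hT r hr1] at this; linarith
    have hgt : -δ < T r := by
      by_contra hcon
      push_neg at hcon
      rcases eq_or_lt_of_le hcon with h | h
      · rw [← h, hT r hr1] at h2r; linarith
      · have := hanti r hr1 (T r) (-δ) h
        rw [hT r hr1] at this; linarith
    rw [Real.dist_eq, sub_zero, abs_lt]
    constructor
    · linarith [min_le_left ε (1:ℝ)]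
    · linarith [min_le_left ε (1:ℝ)]
  have hTev1 : ∀ᶠ r in 𝓝[>] q, |T r| ≤ 1 := by
    filter_upwards [(Metric.tendsto_nhds.1 hT0) 1 one_pos] with r hr
    rw [Real.dist_eq, sub_zero] at hr
    exact hr.le
  -- convergence of the normalizing integral
  have hI : Tendsto (fun r => ∫ x, |f x - T r| ^ r ∂υ) (𝓝[>] q) (𝓝 1) := by
    rw [← h1]
    refine tendsto_integral_filter_of_dominated_convergence
      (fun _ => max 1 (M + 1) ^ (q+1)) ?_ ?_ (integrable_const _) ?_
    · filter_upwards [hIoo] with r hr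
      exact ((Real.continuous_rpow_const (by linarith [hr.1] : (0:ℝ) ≤ r)).comp
        ((hfc.sub continuous_const).abs)).aestronglyMeasurable
    · filter_upwards [hIoo, hTev1] with r hr hr1
      refine Filter.Eventually.of_forall fun x => ?_
      rw [Real.norm_eq_abs, abs_of_nonneg (Real.rpow_nonneg (abs_nonneg _) _)]
      refine rpow_le_bound (abs_nonneg _) ?_ (by linarith [hr.1]) (by linarith [hr.2])
      calc |f x - T r| ≤ |f x| + |T r| := abs_sub _ _
        _ ≤ M + 1 := add_le_add (hM x) hr1
    · refine Filter.Eventually.of_forall fun x => ?_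
      have hbase : Tendsto (fun r => |f x - T r|) (𝓝[>] q) (𝓝 |f x|) := by
        have : Tendsto (fun r => f x - T r) (𝓝[>] q) (𝓝 (f x - 0)) :=
          tendsto_const_nhds.sub hT0
        rw [sub_zero] at this
        exact (continuous_abs.tendsto _).comp this
      exact hbase.rpow (tendsto_id.mono_right nhdsWithin_le_nhds)
        (Or.inr (by linarith : (0:ℝ) < q))
  -- convergence of the pLip integral
  have hg0 : ∀ x, 0 ≤ pLip f x := pLip_nonneg f
  have hgK : ∀ x, pLip f x ≤ K := pLip_le f hK
  have hJ : Tendsto (fun r => ∫ x, pLip f x ^ r ∂υ) (𝓝[>] q)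
      (𝓝 (∫ x, pLip f x ^ q ∂υ)) := by
    by_cases hm : AEStronglyMeasurable (pLip f) υ
    · refine tendsto_integral_filter_of_dominated_convergence
        (fun _ => max 1 (K:ℝ) ^ (q+1)) ?_ ?_ (integrable_const _) ?_
      · filter_upwards [hIoo] with r hr
        exact (Real.continuous_rpow_const
          (by linarith [hr.1] : (0:ℝ) ≤ r)).comp_aestronglyMeasurable hm
      · filter_upwards [hIoo] with r hr
        refine Filter.Eventually.of_forall fun x => ?_
        rw [Real.norm_eq_abs, abs_of_nonneg (Real.rpow_nonneg (hg0 x) _)]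
        exact rpow_le_bound (hg0 x) (hgK x) (by linarith [hr.1]) (by linarith [hr.2])
      · refine Filter.Eventually.of_forall fun x => ?_
        exact tendsto_const_nhds.rpow (tendsto_id.mono_right nhdsWithin_le_nhds)
          (Or.inr (by linarith : (0:ℝ) < q))
    · have hzero : ∀ r : ℝ, 0 < r → (∫ x, pLip f x ^ r ∂υ) = 0 := by
        intro r hr
        refine integral_undef fun hint => hm ?_
        have h3 : AEStronglyMeasurable (fun x => pLip f x ^ r) υ := hint.aestronglyMeasurable
        have h4 : pLip f = fun x => (pLip f x ^ r) ^ r⁻¹ := by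
          funext x
          rw [← Real.rpow_mul (hg0 x), mul_inv_cancel₀ hr.ne', Real.rpow_one]
        rw [h4]
        exact (Real.continuous_rpow_const
          (inv_nonneg.2 hr.le)).comp_aestronglyMeasurable h3
      rw [hzero q (by linarith)]
      refine Filter.Tendsto.congr' ?_ tendsto_const_nhds
      filter_upwards [hIoo] with r hr
      exact (hzero r (by linarith [hr.1])).symm
  -- the eventual competitor bound
  have hev : ∀ᶠ r in 𝓝[>] q, lambda1 υ r ≤
      ENNReal.ofReal ((∫ x, |f x - T r| ^ r ∂υ)⁻¹ * ∫ x, pLip f x ^ r ∂υ) := by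
    filter_upwards [hIoo, hI.eventually_const_lt (by norm_num : (1:ℝ)/2 < 1)]
      with r hrIoo hIr
    have hr1 : 1 < r := by linarith [hrIoo.1]
    have hr0 : (0:ℝ) < r := by linarith
    set I : ℝ := ∫ x, |f x - T r| ^ r ∂υ with hIdef
    have hI0 : 0 < I := by linarith
    set c : ℝ := I ^ (1/r) with hcdef
    have hc0 : 0 < c := Real.rpow_pos_of_pos hI0 _
    have hcr : c ^ r = I := by
      rw [hcdef, ← Real.rpow_mul hI0.le, one_div, inv_mul_cancel₀ hr0.ne', Real.rpow_one]
    have hcinv : (c⁻¹) ^ r = I⁻¹ := by rw [Real.inv_rpow hc0.le, hcr]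
    set u : X → ℝ := fun x => c⁻¹ * (f x - T r) with hudef
    have humem : u ∈ {f : X → ℝ | IsLipFun f ∧ (∫ x, |f x| ^ r ∂υ) = 1 ∧
        (∫ x, |f x| ^ (r-2) * f x ∂υ) = 0} := by
      refine ⟨?_, ?_, ?_⟩
      · refine ⟨‖c⁻¹‖₊ * K, LipschitzWith.of_dist_le_mul fun a b => ?_⟩
        have h6 : dist (u a) (u b) = |c⁻¹| * |f a - f b| := by
          rw [show u a = c⁻¹ * (f a - T r) from rfl, show u b = c⁻¹ * (f b - T r) from rfl,
            Real.dist_eq, show c⁻¹ * (f a - T r) - c⁻¹ * (f b - T r) = c⁻¹ * (f a - f b)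
              by ring, abs_mul]
        calc dist (u a) (u b) = |c⁻¹| * |f a - f b| := h6
          _ = |c⁻¹| * dist (f a) (f b) := by rw [Real.dist_eq]
          _ ≤ |c⁻¹| * (K * dist a b) :=
              mul_le_mul_of_nonneg_left (hK.dist_le_mul a b) (abs_nonneg _)
          _ = ↑(‖c⁻¹‖₊ * K) * dist a b := by
              rw [NNReal.coe_mul, coe_nnnorm, Real.norm_eq_abs, mul_assoc]
      · have hptw : ∀ x, |u x| ^ r = I⁻¹ * |f x - T r| ^ r := by
          intro x
          rw [show u x = c⁻¹ * (f x - T r) from rfl, abs_mul,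
            abs_of_nonneg (inv_nonneg.2 hc0.le),
            Real.mul_rpow (inv_nonneg.2 hc0.le) (abs_nonneg _), hcinv]
        simp only [hptw]
        rw [integral_const_mul, ← hIdef, inv_mul_cancel₀ hI0.ne']
      · have hptw : ∀ x, |u x| ^ (r-2) * u x
            = ((c⁻¹) ^ (r-2) * c⁻¹) * psi r (f x - T r) := by
          intro x
          rw [show u x = c⁻¹ * (f x - T r) from rfl, abs_mul,
            abs_of_nonneg (inv_nonneg.2 hc0.le),
            Real.mul_rpow (inv_nonneg.2 hc0.le) (abs_nonneg _), psi]
          ring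
        simp only [hptw]
        rw [integral_const_mul]
        have h7 := hT r hr1
        simp only [hφdef] at h7
        rw [h7, mul_zero]
    refine le_trans (iInf₂_le u humem) (le_of_eq ?_)
    congr 1
    have hptw : ∀ x, pLip u x ^ r = I⁻¹ * pLip f x ^ r := by
      intro x
      have hpl : pLip u x = c⁻¹ * pLip f x := by
        rw [hudef, pLip_const_mul (fun y => f y - T r) (inv_nonneg.2 hc0.le) x,
          pLip_sub_const]
      rw [hpl, Real.mul_rpow (inv_nonneg.2 hc0.le) (hg0 x), hcinv]
    simp only [hptw]
    rw [integral_const_mul]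
  -- conclusion
  have hA : Tendsto
      (fun r => ENNReal.ofReal ((∫ x, |f x - T r| ^ r ∂υ)⁻¹ * ∫ x, pLip f x ^ r ∂υ))
      (𝓝[>] q) (𝓝 (ENNReal.ofReal (∫ x, pLip f x ^ q ∂υ))) := by
    apply ENNReal.tendsto_ofReal
    have h8 := (hI.inv₀ one_ne_zero).mul hJ
    rw [inv_one, one_mul] at h8
    exact h8
  calc Filter.limsup (fun r : ℝ => lambda1 υ r) (𝓝[>] q)
      ≤ Filter.limsup
          (fun r => ENNReal.ofReal ((∫ x, |f x - T r| ^ r ∂υ)⁻¹ * ∫ x, pLip f x ^ r ∂υ))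
          (𝓝[>] q) := Filter.limsup_le_limsup hev
    _ = ENNReal.ofReal (∫ x, pLip f x ^ q ∂υ) := hA.limsup_eq

end Main

/-- `limsup_{r → q⁺} λ_{1,r}(X) ≤ λ_{1,q}(X)`. -/
theorem stmt18 {X : Type*} [MetricSpace X] [CompactSpace X] [MeasurableSpace X] [BorelSpace X]
    (υ : Measure X) [IsProbabilityMeasure υ]
    (q : ℝ) (hq : 1 < q) :
    Filter.limsup (fun r : ℝ => lambda1 υ r) (𝓝[>] q) ≤ lambda1 υ q ∧
      ∀ rs : ℕ → ℝ, (∀ i, q < rs i) → StrictAnti rs →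
        Filter.Tendsto rs Filter.atTop (𝓝 q) →
        Filter.limsup (fun i => lambda1 υ (rs i)) Filter.atTop ≤ lambda1 υ q := by
  refine ⟨key υ q hq, fun rs h1 h2 h3 => le_trans ?_ (key υ q hq)⟩
  have hmap : Filter.Tendsto rs Filter.atTop (𝓝[>] q) :=
    tendsto_nhdsWithin_iff.2 ⟨h3, Filter.Eventually.of_forall fun i => h1 i⟩
  calc Filter.limsup (fun i => lambda1 υ (rs i)) Filter.atTop
      = Filter.limsup (fun r => lambda1 υ r) (Filter.map rs Filter.atTop) :=
        (Filter.limsup_comp (fun r => lambda1 υ r) rs Filter.atTop).symm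
    _ ≤ Filter.limsup (fun r => lambda1 υ r) (𝓝[>] q) :=
        Filter.limsup_le_limsup_of_le hmap
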